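/- For the n/k-repetition-coded distributed algorithm with shifted-exponential task runtimes, the expected overall runtime equals (1/k)(1 + (k/(nμ)) H_k), where H_k is the k-th harmonic number. -/

import Mathlib

open MeasureTheory Set Filter Topology

lemma aux_term_integral (c a : ℝ) (hc : 0 < c) (i : ℕ) :
    IntegrableOn (fun t => Real.exp (-(c * (t - a))) * (1 - Real.exp (-(c * (t - a)))) ^ i)
      (Ioi a) ∧
    ∫ t in Ioi a, Real.exp (-(c * (t - a))) * (1 - Real.exp (-(c * (t - a)))) ^ i
      = 1 / (c * (i + 1)) := by
  set g : ℝ → ℝ := fun t => (1 - Real.exp (-(c * (t - a)))) ^ (i + 1) / (c * (i + 1)) with hg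
  have hderiv : ∀ x : ℝ,
      HasDerivAt g (Real.exp (-(c * (x - a))) * (1 - Real.exp (-(c * (x - a)))) ^ i) x := by
    intro x
    have h1 : HasDerivAt (fun t : ℝ => -(c * (t - a))) (-c) x := by
      exact (((hasDerivAt_id x).sub_const a).const_mul c).neg.congr_deriv (by ring)
    have h2 : HasDerivAt (fun t => Real.exp (-(c * (t - a))))
        (Real.exp (-(c * (x - a))) * (-c)) x := h1.exp
    have h3 : HasDerivAt (fun t => 1 - Real.exp (-(c * (t - a))))
        (c * Real.exp (-(c * (x - a)))) x := by
      have := h2.const_sub 1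
      refine this.congr_deriv ?_
      ring
    have h4 := (h3.pow (i + 1)).div_const (c * (i + 1))
    refine h4.congr_deriv ?_
    have hc' : (c : ℝ) * (i + 1) ≠ 0 := by positivity
    simp only [Nat.add_sub_cancel, Nat.cast_add, Nat.cast_one]
    field_simp
  have hnonneg : ∀ x ∈ Ioi a,
      0 ≤ Real.exp (-(c * (x - a))) * (1 - Real.exp (-(c * (x - a)))) ^ i := by
    intro x hx
    have h1 : Real.exp (-(c * (x - a))) ≤ 1 := by
      rw [← Real.exp_zero]
      apply Real.exp_le_exp.mpr
      nlinarith [hx.out]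
    exact mul_nonneg (Real.exp_nonneg _) (pow_nonneg (by linarith) _)
  have htend : Tendsto g atTop (𝓝 (1 / (c * (i + 1)))) := by
    have hE : Tendsto (fun t : ℝ => Real.exp (-(c * (t - a)))) atTop (𝓝 0) := by
      apply Real.tendsto_exp_atBot.comp
      apply Filter.tendsto_neg_atTop_atBot.comp
      exact (tendsto_atTop_add_const_right _ (-a) tendsto_id).const_mul_atTop hc
    have : Tendsto g atTop (𝓝 ((1 - 0) ^ (i + 1) / (c * (i + 1)))) :=
      ((tendsto_const_nhds.sub hE).pow (i + 1)).div_const _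
    simpa using this
  have hga : g a = 0 := by simp [hg]
  constructor
  · exact integrableOn_Ioi_deriv_of_nonneg' (fun x _ => hderiv x) hnonneg htend
  · rw [integral_Ioi_of_hasDerivAt_of_nonneg' (fun x _ => hderiv x) hnonneg htend, hga, sub_zero]

lemma aux_geom_identity (x : ℝ) (k : ℕ) :
    1 - (1 - x) ^ k = ∑ i ∈ Finset.range k, x * (1 - x) ^ i := by
  induction k with
  | zero => simp
  | succ k ih =>
    rw [Finset.sum_range_succ, ← ih, pow_succ]
    ring

lemma aux_tail_integral (c a : ℝ) (hc : 0 < c) (k : ℕ) :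
    IntegrableOn (fun t => 1 - (1 - Real.exp (-(c * (t - a)))) ^ k) (Ioi a) ∧
    ∫ t in Ioi a, (1 - (1 - Real.exp (-(c * (t - a)))) ^ k)
      = (∑ i ∈ Finset.range k, (1 : ℝ) / (i + 1)) / c := by
  have hfun : (fun t => 1 - (1 - Real.exp (-(c * (t - a)))) ^ k)
      = fun t => ∑ i ∈ Finset.range k,
          Real.exp (-(c * (t - a))) * (1 - Real.exp (-(c * (t - a)))) ^ i := by
    funext t
    exact aux_geom_identity _ k
  have hint : ∀ i ∈ Finset.range k,
      IntegrableOn (fun t => Real.exp (-(c * (t - a))) * (1 - Real.exp (-(c * (t - a)))) ^ i)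
        (Ioi a) := fun i _ => (aux_term_integral c a hc i).1
  constructor
  · rw [hfun]
    exact integrable_finset_sum _ hint
  · rw [hfun, integral_finset_sum _ hint]
    rw [Finset.sum_congr rfl (fun i _ => (aux_term_integral c a hc i).2)]
    rw [Finset.sum_div]
    congr 1
    funext i
    rw [one_div, one_div, mul_inv, div_eq_mul_inv, mul_comm]

open ProbabilityTheory ENNReal

/-- For the `n/k`-repetition-coded distributed algorithm with shifted-exponential task
runtimes (`n = k * m` workers split into `k` groups of `m`, each worker runtime with
CDF `F(kt)`, `F(t) = 1 - e^{-μ(t-1)}` for `t ≥ 1`), the expected overall runtime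
(max over groups of the min within each group) equals `(1/k)(1 + (k/(nμ)) H_k)`. -/
theorem expected_runtime_repetition_coded
    {Ω : Type*} [MeasureSpace Ω] [IsProbabilityMeasure (ℙ : Measure Ω)]
    (n k m : ℕ) (hk : 0 < k) (hm : 0 < m) (hnm : n = k * m) (μ : ℝ) (hμ : 0 < μ)
    (T : Fin k × Fin m → Ω → ℝ)
    (hmeas : ∀ i, Measurable (T i))
    (hindep : iIndepFun (m := fun _ => (inferInstance : MeasurableSpace ℝ)) T ℙ)
    (hdist : ∀ i, ∀ t : ℝ,
      ℙ {ω | T i ω ≤ t} =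
        ENNReal.ofReal (if 1 ≤ (k : ℝ) * t then 1 - Real.exp (-μ * ((k : ℝ) * t - 1)) else 0)) :
    ∫ ω, (⨆ g : Fin k, ⨅ j : Fin m, T (g, j) ω) ∂ℙ =
      (1 / (k : ℝ)) *
        (1 + ((k : ℝ) / ((n : ℝ) * μ)) * (∑ i ∈ Finset.range k, (1 : ℝ) / (i + 1))) := by
  haveI : Nonempty (Fin k) := Fin.pos_iff_nonempty.mp hk
  haveI : Nonempty (Fin m) := Fin.pos_iff_nonempty.mp hm
  have hk' : (0 : ℝ) < k := by exact_mod_cast hk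
  have hm' : (0 : ℝ) < m := by exact_mod_cast hm
  have hn' : (n : ℝ) = (k : ℝ) * m := by exact_mod_cast hnm
  set c : ℝ := (n : ℝ) * μ with hc_def
  have hc : 0 < c := by rw [hc_def, hn']; positivity
  set a : ℝ := 1 / (k : ℝ) with ha_def
  have ha : 0 < a := by positivity
  set X : Ω → ℝ := fun ω => ⨆ g : Fin k, ⨅ j : Fin m, T (g, j) ω with hX_def
  set q : ℝ → ℝ := fun t =>
    if 1 ≤ (k : ℝ) * t then Real.exp (-μ * ((k : ℝ) * t - 1)) else 1 with hq_def
  have hq_pos : ∀ t, 0 < q t := by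
    intro t; rw [hq_def]; dsimp only; split
    · exact Real.exp_pos _
    · exact one_pos
  have hq_le : ∀ t, q t ≤ 1 := by
    intro t; rw [hq_def]; dsimp only; split_ifs with h
    · have h0 : -μ * ((k:ℝ) * t - 1) ≤ 0 := by
        nlinarith [mul_nonneg hμ.le (by linarith : (0:ℝ) ≤ (k:ℝ)*t - 1)]
      calc Real.exp (-μ * ((k:ℝ) * t - 1)) ≤ Real.exp 0 := Real.exp_le_exp.mpr h0
        _ = 1 := Real.exp_zero
    · exact le_rfl
  have hqm_le : ∀ t, q t ^ m ≤ 1 := fun t => pow_le_one₀ (hq_pos t).le (hq_le t)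
  have hqm_pos : ∀ t, 0 < q t ^ m := fun t => pow_pos (hq_pos t) m
  -- per-worker survival probability
  have hsurv : ∀ i t, ℙ {ω | t < T i ω} = ENNReal.ofReal (q t) := by
    intro i t
    have hset : {ω | t < T i ω} = {ω | T i ω ≤ t}ᶜ := by
      ext ω; simp [not_le]
    have hmF : MeasurableSet {ω | T i ω ≤ t} := hmeas i measurableSet_Iic
    have hFq : (if 1 ≤ (k : ℝ) * t then 1 - Real.exp (-μ * ((k : ℝ) * t - 1)) else 0)
        = 1 - q t := by
      simp only [hq_def]; split_ifs <;> ring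
    have hofr : ENNReal.ofReal (q t) = 1 - ENNReal.ofReal (1 - q t) := by
      rw [ENNReal.ofReal_sub _ (hq_pos t).le, ENNReal.ofReal_one]
      rw [ENNReal.sub_sub_cancel (by simp) (by
        exact ENNReal.ofReal_le_one.mpr (hq_le t))]
    rw [hset, prob_compl_eq_one_sub hmF, hdist i t, hFq, hofr]
  -- within-group survival
  have hgrp : ∀ (g : Fin k) (t : ℝ),
      ℙ (⋂ j : Fin m, {ω | t < T (g, j) ω}) = ENNReal.ofReal (q t) ^ m := by
    intro g t
    classical
    have hsets : ∀ i : Fin k × Fin m, i ∈ Finset.univ →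
        MeasurableSet (if i.1 = g then Ioi t else (univ : Set ℝ)) := by
      intro i _; split_ifs
      exacts [measurableSet_Ioi, MeasurableSet.univ]
    have h := hindep.measure_inter_preimage_eq_mul Finset.univ hsets
    have hset : (⋂ i ∈ Finset.univ, T i ⁻¹' (if i.1 = g then Ioi t else univ))
        = ⋂ j : Fin m, {ω | t < T (g, j) ω} := by
      ext ω
      simp only [Set.mem_iInter, Finset.mem_univ, Set.mem_preimage, forall_const,
        Set.mem_setOf_eq]
      constructor
      · intro h j
        have := h (g, j)
        simpa using this
      · rintro h ⟨g', j⟩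
        by_cases hg : g' = g
        · subst hg; simpa using h j
        · simp [hg]
    have hfac : ∀ i : Fin k × Fin m,
        ℙ (T i ⁻¹' (if i.1 = g then Ioi t else univ))
          = if i.1 = g then ENNReal.ofReal (q t) else 1 := by
      intro i
      by_cases hg : i.1 = g
      · rw [if_pos hg, if_pos hg, ← hsurv i t]
        rfl
      · rw [if_neg hg, if_neg hg]
        simp
    rw [hset] at h
    rw [h, Finset.prod_congr rfl (fun i _ => hfac i), Fintype.prod_prod_type]
    have hinner : ∀ g' : Fin k,
        (∏ j : Fin m, if (g', j).1 = g then ENNReal.ofReal (q t) else 1)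
          = if g' = g then ENNReal.ofReal (q t) ^ m else 1 := by
      intro g'
      by_cases hg : g' = g
      · simp [hg, Finset.prod_const, Finset.card_univ]
      · simp [hg]
    rw [Finset.prod_congr rfl (fun g' _ => hinner g')]
    simp
  -- group minimum CDF
  have hC : ∀ (g : Fin k) (t : ℝ),
      ℙ (⋃ j : Fin m, {ω | T (g, j) ω ≤ t}) = ENNReal.ofReal (1 - q t ^ m) := by
    intro g t
    have hcompl : (⋃ j : Fin m, {ω | T (g, j) ω ≤ t})ᶜ = ⋂ j : Fin m, {ω | t < T (g, j) ω} := by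
      rw [Set.compl_iUnion]
      apply Set.iInter_congr
      intro j
      ext ω; simp [not_le]
    have hmU : MeasurableSet (⋃ j : Fin m, {ω | T (g, j) ω ≤ t}) :=
      MeasurableSet.iUnion fun j => hmeas _ measurableSet_Iic
    have h2 := prob_compl_eq_one_sub (μ := ℙ) hmU.compl
    rw [compl_compl, hcompl, hgrp g t] at h2
    rw [h2, ← ENNReal.ofReal_pow (hq_pos t).le]
    rw [ENNReal.ofReal_sub _ (hqm_pos t).le, ENNReal.ofReal_one]
  -- across-group independence
  have hInter : ∀ (t : ℝ) (s : Finset (Fin k)),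
      ℙ (⋂ g ∈ s, ⋃ j : Fin m, {ω | T (g, j) ω ≤ t})
        = ∏ g ∈ s, ℙ (⋃ j : Fin m, {ω | T (g, j) ω ≤ t}) := by
    intro t s
    classical
    induction s using Finset.induction_on with
    | empty => simp
    | @insert g0 s hgs ih =>
      rw [Finset.set_biInter_insert, Finset.prod_insert hgs, ← ih]
      have h_le : ∀ i : Fin k × Fin m,
          MeasurableSpace.comap (T i) (inferInstance : MeasurableSpace ℝ)
            ≤ (inferInstance : MeasurableSpace Ω) := fun i => (hmeas i).comap_le
      have hdisj : Disjoint {i : Fin k × Fin m | i.1 = g0} {i : Fin k × Fin m | i.1 ∈ s} := by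
        rw [Set.disjoint_left]
        intro i hi1 hi2
        exact hgs (hi1 ▸ hi2)
      have hind := indep_iSup_of_disjoint h_le hindep.iIndep hdisj
      rw [Indep_iff] at hind
      apply hind
      · apply MeasurableSet.iUnion
        intro j
        have h1 : MeasurableSet[MeasurableSpace.comap (T (g0, j))
            (inferInstance : MeasurableSpace ℝ)] {ω | T (g0, j) ω ≤ t} :=
          ⟨Iic t, measurableSet_Iic, rfl⟩
        exact (le_iSup₂ (f := fun (i : Fin k × Fin m) (_ : i ∈ {i : Fin k × Fin m | i.1 = g0}) =>
          MeasurableSpace.comap (T i) (inferInstance : MeasurableSpace ℝ)) (g0, j) rfl) _ h1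
      · apply Finset.measurableSet_biInter
        intro g hg
        apply MeasurableSet.iUnion
        intro j
        have h1 : MeasurableSet[MeasurableSpace.comap (T (g, j))
            (inferInstance : MeasurableSpace ℝ)] {ω | T (g, j) ω ≤ t} :=
          ⟨Iic t, measurableSet_Iic, rfl⟩
        exact (le_iSup₂ (f := fun (i : Fin k × Fin m) (_ : i ∈ {i : Fin k × Fin m | i.1 ∈ s}) =>
          MeasurableSpace.comap (T i) (inferInstance : MeasurableSpace ℝ)) (g, j) hg) _ h1
  -- CDF of X
  have hXset : ∀ t : ℝ, {ω | X ω ≤ t} = ⋂ g : Fin k, ⋃ j : Fin m, {ω | T (g, j) ω ≤ t} := by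
    intro t
    ext ω
    simp only [Set.mem_setOf_eq, Set.mem_iInter, Set.mem_iUnion, hX_def]
    constructor
    · intro h g
      have h1 : (⨅ j : Fin m, T (g, j) ω) ≤ t :=
        le_trans (le_ciSup (f := fun g : Fin k => ⨅ j : Fin m, T (g, j) ω)
          (Set.Finite.bddAbove (Set.finite_range _)) g) h
      obtain ⟨j, hj⟩ := exists_eq_ciInf_of_finite (f := fun j : Fin m => T (g, j) ω)
      exact ⟨j, le_trans (le_of_eq hj) h1⟩
    · intro h
      apply ciSup_le
      intro g
      obtain ⟨j, hj⟩ := h g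
      exact le_trans (ciInf_le (f := fun j : Fin m => T (g, j) ω)
        (Set.Finite.bddBelow (Set.finite_range _)) j) hj
  have hCDF : ∀ t : ℝ, ℙ {ω | X ω ≤ t} = ENNReal.ofReal ((1 - q t ^ m) ^ k) := by
    intro t
    rw [hXset t]
    have huniv : (⋂ g : Fin k, ⋃ j : Fin m, {ω | T (g, j) ω ≤ t})
        = ⋂ g ∈ (Finset.univ : Finset (Fin k)), ⋃ j : Fin m, {ω | T (g, j) ω ≤ t} := by
      simp
    rw [huniv, hInter t Finset.univ, Finset.prod_congr rfl fun g _ => hC g t,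
      Finset.prod_const, Finset.card_univ, Fintype.card_fin,
      ← ENNReal.ofReal_pow (by linarith [hqm_le t] : (0:ℝ) ≤ 1 - q t ^ m)]
  have hXmeas : Measurable X := by
    apply measurable_of_Iic
    intro t
    rw [show X ⁻¹' Iic t = {ω | X ω ≤ t} from rfl, hXset]
    exact MeasurableSet.iInter fun g => MeasurableSet.iUnion fun j => hmeas _ measurableSet_Iic
  have hX_nn : 0 ≤ᵐ[ℙ] X := by
    have h0 : ℙ {ω | X ω ≤ 0} = 0 := by
      rw [hCDF 0]
      have hq0 : q 0 = 1 := by simp [hq_def]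
      rw [hq0, one_pow, sub_self, zero_pow hk.ne', ENNReal.ofReal_zero]
    rw [Filter.EventuallyLE, ae_iff]
    apply measure_mono_null _ h0
    intro ω hω
    simp only [Set.mem_setOf_eq, Pi.zero_apply, not_le] at hω
    exact le_of_lt hω
  have htail : ∀ t : ℝ, ℙ {ω | t < X ω} = ENNReal.ofReal (1 - (1 - q t ^ m) ^ k) := by
    intro t
    have hset : {ω | t < X ω} = {ω | X ω ≤ t}ᶜ := by
      ext ω; simp [not_le]
    have hmset : MeasurableSet {ω | X ω ≤ t} := hXmeas measurableSet_Iic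
    rw [hset, prob_compl_eq_one_sub hmset, hCDF t]
    have h1 : (0:ℝ) ≤ 1 - q t ^ m := by linarith [hqm_le t]
    have := ENNReal.ofReal_sub 1 (pow_nonneg h1 k)
    rw [ENNReal.ofReal_one] at this
    exact this.symm
  -- the tail function
  set G : ℝ → ℝ := fun t => 1 - (1 - q t ^ m) ^ k with hG_def
  have hG_nonneg : ∀ t, 0 ≤ G t := by
    intro t
    have h1 : 0 ≤ 1 - q t ^ m := by linarith [hqm_le t]
    have h2 : (1 - q t ^ m) ^ k ≤ 1 := pow_le_one₀ h1 (by linarith [hqm_pos t])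
    simp only [hG_def]; linarith
  have hG_le : ∀ t, G t ≤ 1 := by
    intro t
    have h1 : 0 ≤ 1 - q t ^ m := by linarith [hqm_le t]
    have : 0 ≤ (1 - q t ^ m) ^ k := pow_nonneg h1 k
    simp only [hG_def]; linarith
  have hG1 : ∀ t ∈ Ioc 0 a, G t = 1 := by
    intro t ht
    have hq1 : q t = 1 := by
      have hkt : (k : ℝ) * t ≤ 1 := by
        have h2 := mul_le_mul_of_nonneg_left ht.2 hk'.le
        have e : (k : ℝ) * a = 1 := by rw [ha_def]; field_simp
        linarith
      simp only [hq_def]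
      split_ifs with h
      · have hkt1 : (k : ℝ) * t = 1 := le_antisymm hkt h
        rw [hkt1]; simp
      · rfl
    simp [hG_def, hq1, zero_pow hk.ne']
  have hG2 : ∀ t ∈ Ioi a, G t = 1 - (1 - Real.exp (-(c * (t - a)))) ^ k := by
    intro t ht
    have ht' : a < t := ht
    have h1 : 1 ≤ (k : ℝ) * t := by
      rw [ha_def] at ht'
      rw [div_lt_iff₀ hk'] at ht'
      nlinarith
    have hq : q t = Real.exp (-μ * ((k : ℝ) * t - 1)) := by
      simp only [hq_def]; rw [if_pos h1]
    have hqm : q t ^ m = Real.exp (-(c * (t - a))) := by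
      rw [hq, ← Real.exp_nat_mul]
      congr 1
      rw [hc_def, hn', ha_def]
      field_simp
    simp only [hG_def, hqm]
  have hi1 : IntegrableOn G (Ioc 0 a) := by
    have hcon : IntegrableOn (fun _ : ℝ => (1:ℝ)) (Ioc 0 a) := by
      apply (integrableOn_const_iff (C := (1:ℝ)) (by simp)).mpr
      right
      exact measure_Ioc_lt_top
    exact hcon.congr_fun (fun t ht => (hG1 t ht).symm) measurableSet_Ioc
  have hi2 : IntegrableOn G (Ioi a) :=
    ((aux_tail_integral c a hc k).1).congr_fun (fun t ht => (hG2 t ht).symm) measurableSet_Ioi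
  have hGint : IntegrableOn G (Ioi 0) := by
    have := hi1.union hi2
    rwa [Set.Ioc_union_Ioi_eq_Ioi ha.le] at this
  have hGval : ∫ t in Ioi 0, G t = a + (∑ i ∈ Finset.range k, (1 : ℝ) / (i + 1)) / c := by
    rw [← Set.Ioc_union_Ioi_eq_Ioi ha.le,
      setIntegral_union (Set.Ioc_disjoint_Ioi le_rfl) measurableSet_Ioi hi1 hi2]
    have hI1 : ∫ t in Ioc 0 a, G t = a := by
      rw [setIntegral_congr_fun measurableSet_Ioc hG1]
      simp [Real.volume_Ioc, ha.le]
    have hI2 : ∫ t in Ioi a, G t = (∑ i ∈ Finset.range k, (1 : ℝ) / (i + 1)) / c := by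
      rw [setIntegral_congr_fun measurableSet_Ioi hG2]
      exact (aux_tail_integral c a hc k).2
    rw [hI1, hI2]
  -- put everything together
  have hSnn : (0:ℝ) ≤ ∑ i ∈ Finset.range k, (1 : ℝ) / (i + 1) := by
    apply Finset.sum_nonneg
    intro i _
    positivity
  calc ∫ ω, X ω ∂ℙ
      = (∫⁻ ω, ENNReal.ofReal (X ω) ∂ℙ).toReal :=
        integral_eq_lintegral_of_nonneg_ae hX_nn hXmeas.aestronglyMeasurable
    _ = (∫⁻ t in Ioi 0, ℙ {ω | t < X ω}).toReal := by
        rw [lintegral_eq_lintegral_meas_lt ℙ hX_nn hXmeas.aemeasurable]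
    _ = (∫⁻ t in Ioi 0, ENNReal.ofReal (G t)).toReal := by
        congr 1
        exact lintegral_congr fun t => htail t
    _ = (ENNReal.ofReal (∫ t in Ioi 0, G t)).toReal := by
        rw [← ofReal_integral_eq_lintegral_ofReal hGint (ae_of_all _ fun t => hG_nonneg t)]
    _ = a + (∑ i ∈ Finset.range k, (1 : ℝ) / (i + 1)) / c := by
        rw [hGval, ENNReal.toReal_ofReal (by positivity)]
    _ = a * (1 + ((k : ℝ) / c) * (∑ i ∈ Finset.range k, (1 : ℝ) / (i + 1))) := by
        rw [ha_def]
        field_simp
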